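/- Segment inequality implies L¹-Poincaré: let (X,d,m) be a metric measure space, B_R ⊂ X a ball, and suppose that for each pair (x,y) ∈ B_R × B_R there is a probability measure λ_{xy} on geodesics from x to y such that for all nonnegative measurable g: ∫_{B_R}∫_{B_R}∫_{Γ(x,y)}∫₀¹ g(γ(t)) dt dλ_{xy} dm(x) dm(y) ≤ C·m(B_R)·∫_{B_{2R}} g dm. Then for any f with upper gradient h: ∫_{B_R}∫_{B_R} |f(x)-f(y)|/d(x,y) dm(x) dm(y) ≤ C·m(B_R)·∫_{B_{2R}} h dm. -/

import Mathlib

open MeasureTheory Set Metric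

def IsGeodesic {X : Type*} [MetricSpace X] (γ : ℝ → X) : Prop :=
  ∀ s ∈ Set.Icc (0:ℝ) 1, ∀ t ∈ Set.Icc (0:ℝ) 1,
    dist (γ s) (γ t) = |s - t| * dist (γ 0) (γ 1)

def IsUpperGradient {X : Type*} [MetricSpace X] (f : X → ℝ) (h : X → ENNReal) :
    Prop :=
  ∀ x y : X, ∀ σ : ℝ → X, σ 0 = x → σ (dist x y) = y →
    (∀ s ∈ Set.Icc 0 (dist x y), ∀ t ∈ Set.Icc 0 (dist x y),
      dist (σ s) (σ t) = |s - t|) →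
    ENNReal.ofReal |f x - f y| ≤ ∫⁻ s in Set.Icc 0 (dist x y), h (σ s)

/-- Key pointwise estimate along a single geodesic. -/
theorem key_estimate {X : Type*} [MetricSpace X] (f : X → ℝ) (h : X → ENNReal)
    (hug : IsUpperGradient f h) {x y : X} {γ : ℝ → X}
    (hγ : IsGeodesic γ) (h0 : γ 0 = x) (h1 : γ 1 = y) :
    ENNReal.ofReal (|f x - f y| / dist x y) ≤ ∫⁻ t in Set.Icc (0:ℝ) 1, h (γ t) := by
  rcases eq_or_lt_of_le (dist_nonneg (x := x) (y := y)) with hd | hd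
  · have hxy : x = y := dist_eq_zero.mp hd.symm
    simp [hxy]
  · set d := dist x y with hdef
    have hdne : d ≠ 0 := ne_of_gt hd
    have hσ := hug x y (fun s => γ (s / d)) (by simp [h0])
      (by show γ (d / d) = y; rw [div_self hdne, h1]) ?_
    · have hCOV : (∫⁻ s in Set.Icc 0 d, h (γ (s / d))) =
          ENNReal.ofReal d * ∫⁻ t in Set.Icc (0:ℝ) 1, h (γ t) := by
        have hpre : (fun t => d * t) ⁻¹' Set.Icc 0 d = Set.Icc (0:ℝ) 1 := by
          ext t
          simp only [Set.mem_preimage, Set.mem_Icc]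
          constructor
          · rintro ⟨h1', h2'⟩
            exact ⟨nonneg_of_mul_nonneg_right h1' hd,
              by nlinarith⟩
          · rintro ⟨h1', h2'⟩
            exact ⟨by positivity, by nlinarith⟩
        have hmap : ((Measure.map (fun t => d * t) volume).restrict (Set.Icc 0 d))
            = Measure.map (fun t => d * t) (volume.restrict (Set.Icc (0:ℝ) 1)) := by
          rw [Measure.restrict_map (measurable_const_mul d) measurableSet_Icc, hpre]
        calc ∫⁻ s in Set.Icc 0 d, h (γ (s / d)) ∂volume
            = ∫⁻ s in Set.Icc 0 d, h (γ (s / d))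
                ∂(ENNReal.ofReal |d| • Measure.map (fun t => d * t) volume) := by
              rw [Real.smul_map_volume_mul_left hdne]
          _ = ENNReal.ofReal d * ∫⁻ s in Set.Icc 0 d, h (γ (s / d))
                ∂(Measure.map (fun t => d * t) volume) := by
              rw [Measure.restrict_smul, lintegral_smul_measure, smul_eq_mul, abs_of_pos hd]
          _ = ENNReal.ofReal d * ∫⁻ t, h (γ ((d * t) / d))
                ∂(volume.restrict (Set.Icc (0:ℝ) 1)) := by
              rw [hmap, (measurableEmbedding_mulLeft₀ hdne).lintegral_map]
          _ = ENNReal.ofReal d * ∫⁻ t in Set.Icc (0:ℝ) 1, h (γ t) := by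
              congr 1
              refine lintegral_congr fun t => ?_
              rw [mul_div_cancel_left₀ _ hdne]
      rw [hCOV] at hσ
      rw [ENNReal.ofReal_div_of_pos hd]
      rw [ENNReal.div_le_iff_le_mul (Or.inl (by simp [hd]))
        (Or.inl ENNReal.ofReal_ne_top)]
      rwa [mul_comm] at hσ
    · intro s hs t ht
      have hsd : s / d ∈ Set.Icc (0:ℝ) 1 :=
        ⟨div_nonneg hs.1 hd.le, (div_le_one hd).mpr hs.2⟩
      have htd : t / d ∈ Set.Icc (0:ℝ) 1 :=
        ⟨div_nonneg ht.1 hd.le, (div_le_one hd).mpr ht.2⟩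
      have := hγ (s / d) hsd (t / d) htd
      rw [h0, h1] at this
      show dist (γ (s / d)) (γ (t / d)) = |s - t|
      rw [this, div_sub_div_same, abs_div, abs_of_pos hd,
        div_mul_cancel₀ _ hdne]

/-- Segment inequality implies the weak local `L¹`-Poincaré inequality. -/
theorem segment_implies_poincare {X : Type*} [MetricSpace X]
    [MeasurableSpace X] [BorelSpace X] (m : Measure X) (x₀ : X) (R : ℝ)
    (Λ : X → X → Measure (ℝ → X))
    (hΛ : ∀ x ∈ ball x₀ R, ∀ y ∈ ball x₀ R, IsProbabilityMeasure (Λ x y) ∧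
        ∀ᵐ γ ∂(Λ x y), IsGeodesic γ ∧ γ 0 = x ∧ γ 1 = y)
    (C : ENNReal)
    (hseg : ∀ g : X → ENNReal, Measurable g →
        ∫⁻ x in ball x₀ R, ∫⁻ y in ball x₀ R,
            ∫⁻ γ, (∫⁻ t in Set.Icc (0:ℝ) 1, g (γ t)) ∂(Λ x y) ∂m ∂m ≤
          C * m (ball x₀ R) * ∫⁻ z in ball x₀ (2 * R), g z ∂m)
    (f : X → ℝ) (h : X → ENNReal) (hh : Measurable h)
    (hug : IsUpperGradient f h) :
    ∫⁻ x in ball x₀ R, ∫⁻ y in ball x₀ R,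
        ENNReal.ofReal (|f x - f y| / dist x y) ∂m ∂m ≤
      C * m (ball x₀ R) * ∫⁻ z in ball x₀ (2 * R), h z ∂m := by
  refine le_trans ?_ (hseg h hh)
  refine lintegral_mono_ae ?_
  filter_upwards [ae_restrict_mem measurableSet_ball] with x hx
  refine lintegral_mono_ae ?_
  filter_upwards [ae_restrict_mem measurableSet_ball] with y hy
  obtain ⟨hprob, hae⟩ := hΛ x hx y hy
  calc ENNReal.ofReal (|f x - f y| / dist x y)
      = ∫⁻ _, ENNReal.ofReal (|f x - f y| / dist x y) ∂(Λ x y) := by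
        rw [lintegral_const, measure_univ, mul_one]
    _ ≤ ∫⁻ γ, (∫⁻ t in Set.Icc (0:ℝ) 1, h (γ t)) ∂(Λ x y) := by
        refine lintegral_mono_ae ?_
        filter_upwards [hae] with γ hγ
        exact key_estimate f h hug hγ.1 hγ.2.1 hγ.2.2
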